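/- arXiv:0807.0087 — 2 statements merged into one kernel-verified Lean document; each statement's English description precedes it below -/
import Mathlib

section
/- Let N be a fully resolved tree-child time consistent hybridization network on taxa S. A leaf i is a hybrid leaf with sibling tree leaves j1 and j2 under each of its two parents (so the reduction H_0(i;j1,j2) can be applied) if, and only if, L_N(i,j1) = 2 and L_N(i,j2) = 2. -/
open Classical

/-- A walk (path) in a digraph: a nonempty list of vertices with consecutive arcs. -/
def IsWalk {V : Type} (E : V → V → Prop) (p : List V) : Prop := p ≠ [] ∧ p.Chain' E

/-- A path with origin `u` and end `v`. -/
def WalkFromTo {V : Type} (E : V → V → Prop) (u v : V) (p : List V) : Prop :=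
  IsWalk E p ∧ p.head? = some u ∧ p.getLast? = some v

/-- `v` is a descendant of `u` (possibly trivial path from `u` to `v`). -/
def Desc {V : Type} (E : V → V → Prop) (u v : V) : Prop := Relation.ReflTransGen E u v

/-- A root: a node with no incoming arcs. -/
def IsRootNode {V : Type} (E : V → V → Prop) (r : V) : Prop := ∀ u, ¬ E u r

/-- `u` is a strict ancestor of `v`: `v` is a descendant of `u` and every path
from a root to `v` contains `u`. -/
def StrictAnc {V : Type} (E : V → V → Prop) (u v : V) : Prop :=
  Desc E u v ∧ ∀ (r : V) (p : List V), IsRootNode E r → WalkFromTo E r v p → u ∈ p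

/-- In-degree. -/
noncomputable def indeg {V : Type} (E : V → V → Prop) (v : V) : ℕ := {u | E u v}.ncard
/-- Out-degree. -/
noncomputable def outdeg {V : Type} (E : V → V → Prop) (v : V) : ℕ := {w | E v w}.ncard

/-- Tree node: in-degree at most 1. -/
def IsTreeNode {V : Type} (E : V → V → Prop) (v : V) : Prop := indeg E v ≤ 1
/-- Hybrid node: in-degree at least 2. -/
def IsHybrid {V : Type} (E : V → V → Prop) (v : V) : Prop := 2 ≤ indeg E v
/-- Leaf: no outgoing arcs. -/
def IsLeaf {V : Type} (E : V → V → Prop) (v : V) : Prop := ∀ w, ¬ E v w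

/-- Acyclicity: no non-trivial path from a node to itself. -/
def Acyclic {V : Type} (E : V → V → Prop) : Prop := ∀ v, ¬ Relation.TransGen E v v

/-- A hybridization network: a rooted DAG whose single root has out-degree > 1. -/
structure IsHybNet {V : Type} (E : V → V → Prop) (r : V) : Prop where
  acyclic : Acyclic E
  isRoot : IsRootNode E r
  uniqueRoot : ∀ x, IsRootNode E x → x = r
  rootOut : 2 ≤ outdeg E r

/-- Tree-child condition: every internal node has a tree-node child. -/
def TreeChild {V : Type} (E : V → V → Prop) : Prop :=
  ∀ v, ¬ IsLeaf E v → ∃ w, E v w ∧ IsTreeNode E w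

/-- Time consistency: a temporal representation exists. -/
def TimeConsistent {V : Type} (E : V → V → Prop) : Prop :=
  ∃ τ : V → ℕ, ∀ u v, E u v → (IsTreeNode E v → τ u < τ v) ∧ (IsHybrid E v → τ u = τ v)

/-- The leaves are bijectively labeled by `S` via `leaf`. -/
def LabelsLeaves {V S : Type} (E : V → V → Prop) (leaf : S → V) : Prop :=
  Function.Injective leaf ∧ (∀ s, IsLeaf E (leaf s)) ∧ ∀ v, IsLeaf E v → ∃ s, leaf s = v

/-- Distance: length of a shortest path from `u` to `v`. -/
noncomputable def dist {V : Type} (E : V → V → Prop) (u v : V) : ℕ :=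
  sInf {n | ∃ p, WalkFromTo E u v p ∧ p.length = n + 1}

/-- Height: largest length of a path from `v` to a leaf. -/
noncomputable def height {V : Type} (E : V → V → Prop) (v : V) : ℕ :=
  sSup {n | ∃ p w, WalkFromTo E v w p ∧ IsLeaf E w ∧ p.length = n + 1}

/-- Common ancestors of `u` and `v` that are strict ancestors of at least one of them. -/
def CommonSemiStrictAnc {V : Type} (E : V → V → Prop) (u v : V) : Set V :=
  {x | Desc E x u ∧ Desc E x v ∧ (StrictAnc E x u ∨ StrictAnc E x v)}

/-- `x` is a least common semi-strict ancestor of `u` and `v`. -/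
def IsLCSA {V : Type} (E : V → V → Prop) (u v x : V) : Prop :=
  x ∈ CommonSemiStrictAnc E u v ∧ ∀ y ∈ CommonSemiStrictAnc E u v, height E x ≤ height E y

/-- The least common semi-strict ancestor `[u,v]` (the root `r` witnesses nonemptiness). -/
noncomputable def lcsa {V : Type} (E : V → V → Prop) (r u v : V) : V :=
  @Classical.epsilon V ⟨r⟩ (IsLCSA E u v)

/-- `ℓ_N(u,v)`: the distance from `[u,v]` to `u`. -/
noncomputable def ell {V : Type} (E : V → V → Prop) (r u v : V) : ℕ :=
  dist E (lcsa E r u v) u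

/-- `L_N(u,v) = ℓ_N(u,v) + ℓ_N(v,u)`: the LCSA-path length between `u` and `v`. -/
noncomputable def pathLen {V : Type} (E : V → V → Prop) (r u v : V) : ℕ :=
  ell E r u v + ell E r v u

/-- `h_N(u,v)`: −1 if `[u,v]` is a strict ancestor of `u` only, 1 if of `v` only, 0 if of both. -/
noncomputable def hval {V : Type} (E : V → V → Prop) (r u v : V) : ℤ :=
  if StrictAnc E (lcsa E r u v) u then
    (if StrictAnc E (lcsa E r u v) v then 0 else -1)
  else 1

/-- Siblings: distinct nodes sharing a parent. -/
def Sibling {V : Type} (E : V → V → Prop) (u v : V) : Prop :=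
  u ≠ v ∧ ∃ p, E p u ∧ E p v

/-- A tree path: a non-trivial path whose end and intermediate nodes are tree nodes. -/
def TreePath {V : Type} (E : V → V → Prop) (p : List V) (u v : V) : Prop :=
  WalkFromTo E u v p ∧ 2 ≤ p.length ∧ ∀ w ∈ p.tail, IsTreeNode E w

/-- `v` is a tree descendant of `u`. -/
def TreeDesc {V : Type} (E : V → V → Prop) (u v : V) : Prop := ∃ p, TreePath E p u v

/-- Quasi-binary hybridization network. -/
def QuasiBinary {V : Type} (E : V → V → Prop) : Prop :=
  ∀ v : V, (indeg E v, outdeg E v) ∈ ({(0,2),(1,0),(1,2),(2,0),(2,1),(2,2)} : Set (ℕ × ℕ))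

/-- Fully resolved hybridization network node types. -/
def FullyResolvedHyb {V : Type} (E : V → V → Prop) : Prop :=
  ∀ v : V, (indeg E v, outdeg E v) ∈ ({(0,2),(1,0),(1,2),(2,0),(2,2)} : Set (ℕ × ℕ))

/-- Fully resolved phylogenetic network node types. -/
def FullyResolvedPhylo {V : Type} (E : V → V → Prop) : Prop :=
  ∀ v : V, (indeg E v, outdeg E v) ∈ ({(0,2),(1,0),(1,2),(2,1)} : Set (ℕ × ℕ))

/-- Phylogenetic network condition: every hybrid node has exactly one child, a tree node. -/
def PhyloNet {V : Type} (E : V → V → Prop) : Prop :=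
  ∀ v, IsHybrid E v → ∃ w, E v w ∧ IsTreeNode E w ∧ ∀ x, E v x → x = w

namespace Stmt10Aux
variable {V : Type} {E : V → V → Prop}

lemma head_mem_walk {u v : V} {p : List V} (h : WalkFromTo E u v p) : u ∈ p := by
  obtain ⟨⟨hne, _⟩, hh, _⟩ := h
  cases p with
  | nil => exact absurd rfl hne
  | cons a l =>
    simp only [List.head?_cons, Option.some.injEq] at hh
    subst hh; exact List.mem_cons_self

lemma walk_length_one {u v : V} {p : List V} (h : WalkFromTo E u v p) (hl : p.length = 1) :
    u = v := by
  obtain ⟨⟨hne, _⟩, hh, hlast⟩ := h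
  match p, hl with
  | [a], _ =>
    simp only [List.head?_cons, Option.some.injEq] at hh
    simp only [List.getLast?_singleton, Option.some.injEq] at hlast
    exact hh ▸ hlast

lemma walk_length_two {u v : V} {p : List V} (h : WalkFromTo E u v p) (hl : p.length = 2) :
    E u v := by
  obtain ⟨⟨hne, hc⟩, hh, hlast⟩ := h
  match p, hl with
  | [a, b], _ =>
    simp only [List.head?_cons, Option.some.injEq] at hh
    simp only [List.getLast?_cons_cons, List.getLast?_singleton, Option.some.injEq] at hlast
    rw [List.Chain', List.isChain_cons_cons] at hc
    exact hh ▸ hlast ▸ hc.1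

lemma walk_length_ge {u v : V} {p : List V} (h : WalkFromTo E u v p) (huv : u ≠ v) :
    2 ≤ p.length := by
  have h1 : 1 ≤ p.length := List.length_pos_iff.2 h.1.1
  rcases Nat.lt_or_ge p.length 2 with h2 | h2
  · exact absurd (walk_length_one h (by omega)) huv
  · exact h2

lemma walk_desc {p : List V} : ∀ {u v : V}, WalkFromTo E u v p → Desc E u v := by
  induction p with
  | nil => intro u v h; exact absurd rfl h.1.1
  | cons a l ih =>
    intro u v ⟨⟨_, hc⟩, hh, hlast⟩
    simp only [List.head?_cons, Option.some.injEq] at hh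
    subst hh
    cases l with
    | nil =>
      simp only [List.getLast?_singleton, Option.some.injEq] at hlast
      exact hlast ▸ Relation.ReflTransGen.refl
    | cons b l' =>
      rw [List.Chain', List.isChain_cons_cons] at hc
      have hw : WalkFromTo E b v (b :: l') :=
        ⟨⟨List.cons_ne_nil _ _, hc.2⟩, rfl, by
          rw [List.getLast?_cons_cons] at hlast; exact hlast⟩
      exact Relation.ReflTransGen.head hc.1 (ih hw)

lemma desc_walk {u v : V} (h : Desc E u v) : ∃ p, WalkFromTo E u v p := by
  induction h with
  | refl => exact ⟨[u], ⟨List.cons_ne_nil _ _, List.isChain_singleton _⟩, rfl, rfl⟩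
  | tail hab hbc ih =>
    rename_i b c
    obtain ⟨p, ⟨hne, hc⟩, hh, hlast⟩ := ih
    refine ⟨p ++ [c], ⟨by simp, ?_⟩, ?_, by simp⟩
    · rw [List.Chain', List.isChain_append]
      refine ⟨hc, List.isChain_singleton _, ?_⟩
      intro x hx y hy
      simp only [List.head?_cons, Option.mem_def, Option.some.injEq] at hy
      rw [Option.mem_def, hlast, Option.some.injEq] at hx
      exact hx ▸ hy ▸ hbc
    · cases p with
      | nil => exact absurd rfl hne
      | cons a l => simpa using hh

lemma walk_last_parent {p : List V} : ∀ {u v : V}, WalkFromTo E u v p → u ≠ v →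
    ∃ w ∈ p, E w v := by
  induction p with
  | nil => intro u v h; exact absurd rfl h.1.1
  | cons a l ih =>
    intro u v ⟨⟨_, hc⟩, hh, hlast⟩ huv
    simp only [List.head?_cons, Option.some.injEq] at hh
    subst hh
    cases l with
    | nil =>
      simp only [List.getLast?_singleton, Option.some.injEq] at hlast
      exact absurd hlast huv
    | cons b l' =>
      rw [List.Chain', List.isChain_cons_cons] at hc
      rw [List.getLast?_cons_cons] at hlast
      by_cases hbv : b = v
      · exact ⟨_, List.mem_cons_self, hbv ▸ hc.1⟩
      · obtain ⟨w, hwp, hwv⟩ := ih ⟨⟨List.cons_ne_nil _ _, hc.2⟩, rfl, hlast⟩ hbv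
        exact ⟨w, List.mem_cons_of_mem _ hwp, hwv⟩

lemma chain'_mem_transGen : ∀ {l : List V} {a b : V}, List.Chain' E (a :: l) → b ∈ l →
    Relation.TransGen E a b := by
  intro l
  induction l with
  | nil => simp
  | cons c l' ih =>
    intro a b hc hb
    rw [List.Chain', List.isChain_cons_cons] at hc
    rcases List.mem_cons.1 hb with rfl | hb
    · exact Relation.TransGen.single hc.1
    · exact Relation.TransGen.head hc.1 (ih hc.2 hb)

lemma walk_nodup (hac : Acyclic E) : ∀ {p : List V}, p.Chain' E → p.Nodup := by
  intro p
  induction p with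
  | nil => simp
  | cons a l ih =>
    intro hc
    exact List.nodup_cons.2 ⟨fun ha => hac a (chain'_mem_transGen hc ha), ih hc.tail⟩

lemma leaf_desc {u v : V} (hu : IsLeaf E u) (h : Desc E u v) : u = v := by
  rcases Relation.ReflTransGen.cases_head h with rfl | ⟨c, hc, _⟩
  · rfl
  · exact absurd hc (hu c)

lemma height_bddAbove [Fintype V] (hac : Acyclic E) (v : V) :
    BddAbove {n | ∃ p w, WalkFromTo E v w p ∧ IsLeaf E w ∧ p.length = n + 1} := by
  refine ⟨Fintype.card V, ?_⟩
  rintro n ⟨p, w, hw, _, hlen⟩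
  have := (walk_nodup hac hw.1.2).length_le_card
  omega

lemma mem_le_height [Fintype V] (hac : Acyclic E) {v : V} {n : ℕ}
    (hn : n ∈ {n | ∃ p w, WalkFromTo E v w p ∧ IsLeaf E w ∧ p.length = n + 1}) :
    n ≤ height E v :=
  le_csSup (height_bddAbove hac v) hn

lemma dist_eq_one {u v : V} (huv : u ≠ v) (h : E u v) : _root_.dist E u v = 1 := by
  have h1 : (1 : ℕ) ∈ {n | ∃ p, WalkFromTo E u v p ∧ p.length = n + 1} :=
    ⟨[u, v], ⟨⟨List.cons_ne_nil _ _, by simp [List.Chain', List.isChain_cons_cons, h]⟩, rfl, rfl⟩, rfl⟩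
  refine le_antisymm (Nat.sInf_le h1) ?_
  by_contra hlt
  have h0 : _root_.dist E u v = 0 := by unfold _root_.dist at *; omega
  have hmem := Nat.sInf_mem (⟨1, h1⟩ : {n | ∃ p, WalkFromTo E u v p ∧ p.length = n + 1}.Nonempty)
  rw [show sInf {n | ∃ p, WalkFromTo E u v p ∧ p.length = n + 1} = _root_.dist E u v from rfl, h0] at hmem
  obtain ⟨p, hp, hlen⟩ := hmem
  exact huv (walk_length_one hp hlen)

lemma dist_pos {u v : V} (hd : Desc E u v) (huv : u ≠ v) : 1 ≤ _root_.dist E u v := by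
  obtain ⟨p, hp⟩ := desc_walk hd
  have hne : {n | ∃ p, WalkFromTo E u v p ∧ p.length = n + 1}.Nonempty :=
    ⟨p.length - 1, p, hp, by have := List.length_pos_iff.2 hp.1.1; omega⟩
  have hmem := Nat.sInf_mem hne
  rcases Nat.eq_zero_or_pos (_root_.dist E u v) with h0 | h1
  · exfalso
    rw [show sInf {n | ∃ p, WalkFromTo E u v p ∧ p.length = n + 1} = _root_.dist E u v from rfl, h0] at hmem
    obtain ⟨q, hq, hqlen⟩ := hmem
    exact huv (walk_length_one hq hqlen)
  · exact h1

lemma parent_of_dist_one {u v : V} (hd : Desc E u v) (h : _root_.dist E u v = 1) : E u v := by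
  obtain ⟨p, hp⟩ := desc_walk hd
  have hne : {n | ∃ p, WalkFromTo E u v p ∧ p.length = n + 1}.Nonempty :=
    ⟨p.length - 1, p, hp, by have := List.length_pos_iff.2 hp.1.1; omega⟩
  have hmem := Nat.sInf_mem hne
  rw [show sInf {n | ∃ p, WalkFromTo E u v p ∧ p.length = n + 1} = _root_.dist E u v from rfl, h] at hmem
  obtain ⟨q, hq, hqlen⟩ := hmem
  exact walk_length_two hq hqlen

lemma CSA_symm (u v : V) : CommonSemiStrictAnc E u v = CommonSemiStrictAnc E v u := by
  ext x
  exact ⟨fun ⟨a, b, c⟩ => ⟨b, a, c.symm⟩, fun ⟨a, b, c⟩ => ⟨b, a, c.symm⟩⟩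

lemma lcsa_symm (r u v : V) : lcsa E r u v = lcsa E r v u := by
  unfold lcsa
  congr 1
  funext x
  unfold IsLCSA
  rw [CSA_symm]

lemma lcsa_isLCSA (r : V) {u v : V} (hne : (CommonSemiStrictAnc E u v).Nonempty) :
    IsLCSA E u v (lcsa E r u v) := by
  have hex : ∃ x, IsLCSA E u v x := by
    have himg : (height E '' CommonSemiStrictAnc E u v).Nonempty := hne.image _
    obtain ⟨x, hx, hxe⟩ := Nat.sInf_mem himg
    exact ⟨x, hx, fun y hy => by
      rw [hxe]; exact Nat.sInf_le (Set.mem_image_of_mem _ hy)⟩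
  exact Classical.epsilon_spec hex

lemma desc_root [Fintype V] {r : V} (hnet : IsHybNet E r) : ∀ v, Desc E r v := by
  have ht : IsTrans V (Relation.TransGen E) := ⟨fun _ _ _ => Relation.TransGen.trans⟩
  have hi : IsIrrefl V (Relation.TransGen E) := ⟨fun a => hnet.acyclic a⟩
  have hwf : WellFounded (fun a b : V => E a b) :=
    Subrelation.wf (fun h => Relation.TransGen.single h)
      (Finite.wellFounded_of_trans_of_irrefl _)
  intro v
  induction v using hwf.induction with
  | _ v ih =>
    by_cases hvr : v = r
    · exact hvr ▸ Relation.ReflTransGen.refl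
    · have : ¬ IsRootNode E v := fun h => hvr (hnet.uniqueRoot v h)
      rw [IsRootNode] at this
      push_neg at this
      obtain ⟨u, hu⟩ := this
      exact (ih u hu).tail hu

end Stmt10Aux
namespace Stmt10Aux
variable {V : Type} {E : V → V → Prop}

lemma children_eq_pair [Fintype V] (hfr : FullyResolvedHyb E) {v a b : V} (hab : a ≠ b)
    (ha : E v a) (hb : E v b) : {w | E v w} = {a, b} := by
  have hout : outdeg E v = 2 := by
    have h := hfr v
    simp only [Set.mem_insert_iff, Set.mem_singleton_iff, Prod.mk.injEq] at h
    have hne : outdeg E v ≠ 0 := by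
      intro h0
      rw [outdeg, Set.ncard_eq_zero (Set.toFinite _)] at h0
      have : a ∈ {w | E v w} := ha
      rw [h0] at this
      exact this
    rcases h with ⟨_, h⟩ | ⟨_, h⟩ | ⟨_, h⟩ | ⟨_, h⟩ | ⟨_, h⟩ <;> omega
  refine (Set.eq_of_subset_of_ncard_le ?_ ?_ (Set.toFinite _)).symm
  · intro w hw
    simp only [Set.mem_insert_iff, Set.mem_singleton_iff] at hw
    rcases hw with rfl | rfl
    · exact ha
    · exact hb
  · rw [show {w | E v w}.ncard = outdeg E v from rfl, hout, Set.ncard_pair hab]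

lemma treeNode_child [Fintype V] (hfr : FullyResolvedHyb E) (htc : TreeChild E)
    {v a b : V} (hab : a ≠ b) (ha : E v a) (hb : E v b)
    (hahyb : IsHybrid E a) : IsTreeNode E b := by
  by_contra hbt
  have hbhyb : 2 ≤ indeg E b := by unfold IsTreeNode at hbt; omega
  have hch := children_eq_pair hfr hab ha hb
  obtain ⟨w, hw, hwt⟩ := htc v (fun h => h a ha)
  have hmem : w ∈ ({a, b} : Set V) := hch ▸ hw
  simp only [Set.mem_insert_iff, Set.mem_singleton_iff] at hmem
  unfold IsTreeNode at hwt
  unfold IsHybrid at hahyb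
  rcases hmem with rfl | rfl <;> omega

lemma pathLen_eq_two [Fintype V] (hac : Acyclic E) (hfr : FullyResolvedHyb E)
    {v1 i j : V} (hi : IsLeaf E i) (hj : IsLeaf E j) (hij : i ≠ j)
    (h1 : E v1 i) (h2 : E v1 j) (htn : IsTreeNode E j) (r : V) :
    pathLen E r i j = 2 := by
  have hv1leaf : ¬ IsLeaf E v1 := fun h => h i h1
  have hch : {w | E v1 w} = {i, j} := children_eq_pair hfr hij h1 h2
  -- height v1 = 1
  have hh1 : height E v1 = 1 := by
    have hset : {n | ∃ p w, WalkFromTo E v1 w p ∧ IsLeaf E w ∧ p.length = n + 1} = {1} := by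
      ext n
      simp only [Set.mem_setOf_eq, Set.mem_singleton_iff]
      constructor
      · rintro ⟨p, w, ⟨⟨hne, hc⟩, hhd, hlast⟩, hwl, hlen⟩
        cases p with
        | nil => exact absurd rfl hne
        | cons a l =>
          simp only [List.head?_cons, Option.some.injEq] at hhd
          subst hhd
          cases l with
          | nil =>
            simp only [List.getLast?_singleton, Option.some.injEq] at hlast
            exact absurd (hlast ▸ hwl) hv1leaf
          | cons b l' =>
            rw [List.Chain', List.isChain_cons_cons] at hc
            have hb : b ∈ ({i, j} : Set V) := hch ▸ hc.1
            simp only [Set.mem_insert_iff, Set.mem_singleton_iff] at hb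
            have hbleaf : IsLeaf E b := by rcases hb with rfl | rfl; exacts [hi, hj]
            cases l' with
            | nil => simp at hlen; omega
            | cons c l'' =>
              have hcc := hc.2
              rw [List.isChain_cons_cons] at hcc
              exact absurd hcc.1 (hbleaf c)
      · rintro rfl
        exact ⟨[v1, i], i, ⟨⟨List.cons_ne_nil _ _, by simp [List.Chain', List.isChain_cons_cons, h1]⟩, rfl, rfl⟩,
          hi, rfl⟩
    rw [height, hset, csSup_singleton]
  -- v1 is a strict ancestor of j
  have hparents : {u | E u j} = {v1} := by
    have hle : indeg E j ≤ 1 := htn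
    have hsub : ({v1} : Set V) ⊆ {u | E u j} := by
      intro w hw
      simp only [Set.mem_singleton_iff] at hw
      exact hw ▸ h2
    refine (Set.eq_of_subset_of_ncard_le hsub ?_ (Set.toFinite _)).symm
    rw [Set.ncard_singleton]; exact hle
  have hstrict : StrictAnc E v1 j := by
    refine ⟨Relation.ReflTransGen.single h2, ?_⟩
    intro r' p hr' hp
    have hr'j : r' ≠ j := fun h => hr' v1 (h ▸ h2)
    obtain ⟨w, hwp, hwj⟩ := walk_last_parent hp hr'j
    have hw1 : w ∈ ({v1} : Set V) := hparents ▸ hwj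
    simp only [Set.mem_singleton_iff] at hw1
    exact hw1 ▸ hwp
  have hv1CSA : v1 ∈ CommonSemiStrictAnc E i j :=
    ⟨Relation.ReflTransGen.single h1, Relation.ReflTransGen.single h2, Or.inr hstrict⟩
  obtain ⟨⟨hdi, hdj, _⟩, hmin⟩ := lcsa_isLCSA (E := E) r ⟨v1, hv1CSA⟩
  have hhx : height E (lcsa E r i j) ≤ 1 := hh1 ▸ hmin v1 hv1CSA
  have hxi : lcsa E r i j ≠ i := fun h => hij (leaf_desc hi (h ▸ hdj))
  have hxj : lcsa E r i j ≠ j := fun h => hij (leaf_desc hj (h ▸ hdi)).symm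
  have hExi : E (lcsa E r i j) i := by
    obtain ⟨p, hp⟩ := desc_walk hdi
    have hlen2 : 2 ≤ p.length := walk_length_ge hp hxi
    rcases Nat.lt_or_ge p.length 3 with h3 | h3
    · exact walk_length_two hp (by omega)
    · exfalso
      have hmem : p.length - 1 ∈
          {n | ∃ q w, WalkFromTo E (lcsa E r i j) w q ∧ IsLeaf E w ∧ q.length = n + 1} :=
        ⟨p, i, hp, hi, by omega⟩
      have := mem_le_height hac hmem
      omega
  have hExj : E (lcsa E r i j) j := by
    obtain ⟨p, hp⟩ := desc_walk hdj
    have hlen2 : 2 ≤ p.length := walk_length_ge hp hxj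
    rcases Nat.lt_or_ge p.length 3 with h3 | h3
    · exact walk_length_two hp (by omega)
    · exfalso
      have hmem : p.length - 1 ∈
          {n | ∃ q w, WalkFromTo E (lcsa E r i j) w q ∧ IsLeaf E w ∧ q.length = n + 1} :=
        ⟨p, j, hp, hj, by omega⟩
      have := mem_le_height hac hmem
      omega
  rw [pathLen, ell, ell, lcsa_symm r j i, dist_eq_one hxi hExi, dist_eq_one hxj hExj]

lemma parent_of_pathLen_two [Fintype V] {r : V} (hnet : IsHybNet E r)
    {i j : V} (hi : IsLeaf E i) (hj : IsLeaf E j) (hij : i ≠ j)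
    (h2 : pathLen E r i j = 2) : E (lcsa E r i j) i ∧ E (lcsa E r i j) j := by
  have hrCSA : r ∈ CommonSemiStrictAnc E i j := by
    refine ⟨desc_root hnet i, desc_root hnet j, Or.inl ⟨desc_root hnet i, ?_⟩⟩
    intro r' p hr' hp
    have hr'r : r' = r := hnet.uniqueRoot r' hr'
    exact hr'r ▸ head_mem_walk hp
  obtain ⟨⟨hdi, hdj, _⟩, _⟩ := lcsa_isLCSA (E := E) r ⟨r, hrCSA⟩
  have hxi : lcsa E r i j ≠ i := fun h => hij (leaf_desc hi (h ▸ hdj))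
  have hxj : lcsa E r i j ≠ j := fun h => hij (leaf_desc hj (h ▸ hdi)).symm
  have e1 : 1 ≤ _root_.dist E (lcsa E r i j) i := dist_pos hdi hxi
  have e2 : 1 ≤ _root_.dist E (lcsa E r i j) j := dist_pos hdj hxj
  rw [pathLen, ell, ell, lcsa_symm r j i] at h2
  exact ⟨parent_of_dist_one hdi (by omega), parent_of_dist_one hdj (by omega)⟩

end Stmt10Aux
open Stmt10Aux

/-- In a fully resolved TCTC hybridization network, the reduction
`H_0(i;j1,j2)` can be applied iff `L_N(i,j1) = 2` and `L_N(i,j2) = 2`. -/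
theorem stmt10 {V : Type} [Fintype V] (E : V → V → Prop) (r : V)
    (hnet : IsHybNet E r) (hfr : FullyResolvedHyb E)
    (htc : TreeChild E) (hti : TimeConsistent E)
    (i j1 j2 : V) (hi : IsLeaf E i) (hj1 : IsLeaf E j1) (hj2 : IsLeaf E j2)
    (h12 : j1 ≠ j2) (hij1 : i ≠ j1) (hij2 : i ≠ j2) :
    (IsHybrid E i ∧ ∃ v1 v2, v1 ≠ v2 ∧ E v1 i ∧ E v2 i ∧
        (∀ u, E u i → u = v1 ∨ u = v2) ∧
        E v1 j1 ∧ E v2 j2 ∧ IsTreeNode E j1 ∧ IsTreeNode E j2) ↔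
      (pathLen E r i j1 = 2 ∧ pathLen E r i j2 = 2) := by
  constructor
  · rintro ⟨hhyb, v1, v2, hne, hv1i, hv2i, hpar, hv1j1, hv2j2, htn1, htn2⟩
    exact ⟨pathLen_eq_two hnet.acyclic hfr hi hj1 hij1 hv1i hv1j1 htn1 r,
      pathLen_eq_two hnet.acyclic hfr hi hj2 hij2 hv2i hv2j2 htn2 r⟩
  · rintro ⟨hp1, hp2⟩
    obtain ⟨hx1i, hx1j1⟩ := parent_of_pathLen_two hnet hi hj1 hij1 hp1
    obtain ⟨hx2i, hx2j2⟩ := parent_of_pathLen_two hnet hi hj2 hij2 hp2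
    set x1 := lcsa E r i j1 with hx1def
    set x2 := lcsa E r i j2 with hx2def
    have hx12 : x1 ≠ x2 := by
      intro h
      have hch := children_eq_pair hfr hij1 hx1i hx1j1
      have : j2 ∈ ({i, j1} : Set V) := hch ▸ (h ▸ hx2j2 : E x1 j2)
      simp only [Set.mem_insert_iff, Set.mem_singleton_iff] at this
      rcases this with rfl | rfl
      · exact hij2 rfl
      · exact h12 rfl
    have hsub : ({x1, x2} : Set V) ⊆ {u | E u i} := by
      intro w hw
      simp only [Set.mem_insert_iff, Set.mem_singleton_iff] at hw
      rcases hw with rfl | rfl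
      · exact hx1i
      · exact hx2i
    have hhyb : IsHybrid E i := by
      have h2le : 2 ≤ indeg E i := by
        rw [indeg, ← Set.ncard_pair hx12]
        exact Set.ncard_le_ncard hsub (Set.toFinite _)
      exact h2le
    have hparents : {u | E u i} = {x1, x2} := by
      have hle : indeg E i ≤ 2 := by
        have h := hfr i
        simp only [Set.mem_insert_iff, Set.mem_singleton_iff, Prod.mk.injEq] at h
        rcases h with ⟨h, _⟩ | ⟨h, _⟩ | ⟨h, _⟩ | ⟨h, _⟩ | ⟨h, _⟩ <;> omega
      refine (Set.eq_of_subset_of_ncard_le hsub ?_ (Set.toFinite _)).symm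
      rw [Set.ncard_pair hx12]; exact hle
    refine ⟨hhyb, x1, x2, hx12, hx1i, hx2i, ?_, hx1j1, hx2j2,
      treeNode_child hfr htc (Ne.symm hij1).symm hx1i hx1j1 hhyb,
      treeNode_child hfr htc (Ne.symm hij2).symm hx2i hx2j2 hhyb⟩
    intro u hu
    have : u ∈ ({x1, x2} : Set V) := hparents ▸ hu
    simpa using this
end

section
/- In a tree-child time consistent hybridization network, if u and v are distinct nodes having a hybrid child in common, then neither u is an ancestor of v through a path containing a tree node other than its origin, nor symmetrically; in particular, u is not a tree descendant of v and v is not a tree descendant of u. -/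
open Classical

lemma chain_tau {V : Type} (E : V → V → Prop) (τ : V → ℕ)
    (hle : ∀ x y, E x y → τ x ≤ τ y)
    (hlt : ∀ x y, E x y → IsTreeNode E y → τ x < τ y) :
    ∀ (p : List V) (u : V), List.Chain E u p →
      (τ u ≤ τ ((u :: p).getLast (List.cons_ne_nil _ _))) ∧
      (∀ w ∈ p, IsTreeNode E w → τ u < τ ((u :: p).getLast (List.cons_ne_nil _ _))) := by
  intro p
  induction p with
  | nil => intro u _; simp
  | cons b q ih =>
    intro u hch
    change List.IsChain E (u :: b :: q) at hch
    rw [List.isChain_cons_cons] at hch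
    obtain ⟨hub, hbq⟩ := hch
    have h1 := ih b hbq
    have hlast : (u :: b :: q).getLast (List.cons_ne_nil _ _)
        = (b :: q).getLast (List.cons_ne_nil _ _) := by
      simp [List.getLast]
    rw [hlast]
    constructor
    · exact le_trans (hle _ _ hub) h1.1
    · intro w hw htw
      rcases List.mem_cons.mp hw with rfl | hw
      · exact lt_of_lt_of_le (hlt _ _ hub htw) h1.1
      · exact lt_of_le_of_lt (hle _ _ hub) (h1.2 w hw htw)

lemma walk_tau {V : Type} (E : V → V → Prop) (τ : V → ℕ)
    (hle : ∀ x y, E x y → τ x ≤ τ y)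
    (hlt : ∀ x y, E x y → IsTreeNode E y → τ x < τ y)
    {u v : V} {p : List V} (hw : WalkFromTo E u v p)
    {w : V} (hwp : w ∈ p.tail) (htw : IsTreeNode E w) : τ u < τ v := by
  obtain ⟨⟨hne, hch⟩, hh, hl⟩ := hw
  cases p with
  | nil => exact absurd rfl hne
  | cons a q =>
    simp at hh; subst hh
    have hch' : List.Chain E a q := hch
    have := (chain_tau E τ hle hlt q a hch').2 w hwp htw
    rw [List.getLast?_eq_getLast (List.cons_ne_nil _ _), Option.some_inj] at hl
    rw [← hl]
    exact this

/-- In a TCTC hybridization network, if distinct `u` and `v` share a hybrid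
child, then no path between them contains a tree node other than its origin; in
particular neither is a tree descendant of the other. -/
theorem stmt16 {V : Type} [Fintype V] (E : V → V → Prop) (r : V)
    (hnet : IsHybNet E r) (htc : TreeChild E) (hti : TimeConsistent E)
    (u v c : V) (huv : u ≠ v) (huc : E u c) (hvc : E v c) (hc : IsHybrid E c) :
    (∀ p, WalkFromTo E u v p → ∀ w ∈ p.tail, ¬ IsTreeNode E w) ∧
    (∀ p, WalkFromTo E v u p → ∀ w ∈ p.tail, ¬ IsTreeNode E w) ∧
    ¬ TreeDesc E u v ∧ ¬ TreeDesc E v u := by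
  obtain ⟨τ, hτ⟩ := hti
  have hle : ∀ x y, E x y → τ x ≤ τ y := by
    intro x y hxy
    rcases le_or_gt (indeg E y) 1 with h | h
    · exact le_of_lt ((hτ x y hxy).1 h)
    · exact le_of_eq ((hτ x y hxy).2 h)
  have hlt : ∀ x y, E x y → IsTreeNode E y → τ x < τ y :=
    fun x y hxy ht => (hτ x y hxy).1 ht
  have huv' : τ u = τ v := by
    rw [(hτ u c huc).2 hc, (hτ v c hvc).2 hc]
  have h1 : ∀ p, WalkFromTo E u v p → ∀ w ∈ p.tail, ¬ IsTreeNode E w := by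
    intro p hp w hw htw
    exact absurd huv' (ne_of_lt (walk_tau E τ hle hlt hp hw htw))
  have h2 : ∀ p, WalkFromTo E v u p → ∀ w ∈ p.tail, ¬ IsTreeNode E w := by
    intro p hp w hw htw
    exact absurd huv'.symm (ne_of_lt (walk_tau E τ hle hlt hp hw htw))
  refine ⟨h1, h2, ?_, ?_⟩
  · rintro ⟨p, hwalk, hlen, htree⟩
    have hne : p.tail ≠ [] := by
      cases p with
      | nil => simp at hlen
      | cons a q => cases q with
        | nil => simp at hlen
        | cons b r => simp
    obtain ⟨w, hw⟩ := List.exists_mem_of_ne_nil _ hne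
    exact h1 p hwalk w hw (htree w hw)
  · rintro ⟨p, hwalk, hlen, htree⟩
    have hne : p.tail ≠ [] := by
      cases p with
      | nil => simp at hlen
      | cons a q => cases q with
        | nil => simp at hlen
        | cons b r => simp
    obtain ⟨w, hw⟩ := List.exists_mem_of_ne_nil _ hne
    exact h2 p hwalk w hw (htree w hw)
end
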